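/- Let G be the graph on 11 vertices consisting of a 10-cycle w_1...w_{10} with an additional leaf w_{11} adjacent to w_{10}. Then the coloring of G □ C_4 assigning blue to v_{2,1}, green to v_{7,3}, and red to every other vertex is an exact 3-coloring with no rainbow 3-AP; consequently aw(G □ C_4, 3) = 4 even though diam(G □ C_4) is even. -/

import Mathlib

open SimpleGraph

/-- A rainbow 3-AP in `G` under coloring `c`: three vertices with
`d(v₁,v₂) = d(v₂,v₃)` receiving pairwise distinct colors. -/
def HasRainbow3AP {V C : Type*} (G : SimpleGraph V) (c : V → C) : Prop :=
  ∃ v₁ v₂ v₃ : V, G.dist v₁ v₂ = G.dist v₂ v₃ ∧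
    c v₁ ≠ c v₂ ∧ c v₂ ≠ c v₃ ∧ c v₁ ≠ c v₃

/-- The anti-van der Waerden number `aw(G,3)`: the least positive `r` such that
every surjective coloring with `r` colors yields a rainbow 3-AP. -/
noncomputable def aw {V : Type*} (G : SimpleGraph V) : ℕ :=
  sInf {r : ℕ | 0 < r ∧ ∀ c : V → Fin r, Function.Surjective c → HasRainbow3AP G c}

/-- The graph on 11 vertices consisting of a 10-cycle `w₁ … w₁₀` (here indices
`0 … 9`) with an additional leaf `w₁₁` (index `10`) adjacent to `w₁₀` (index `9`). -/
def leafCycle : SimpleGraph (Fin 11) :=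
  SimpleGraph.fromRel (fun i j =>
    (i.val + 1 = j.val ∧ j.val ≤ 9) ∨ (i.val = 9 ∧ j.val = 0) ∨
    (i.val = 9 ∧ j.val = 10))

/-- The coloring of `leafCycle □ C₄` assigning blue (= `0`) to `v_{2,1}`,
green (= `1`) to `v_{7,3}`, and red (= `2`) elsewhere. -/
def exCol : Fin 11 × Fin 4 → Fin 3 := fun v =>
  if v = ((1 : Fin 11), (0 : Fin 4)) then 0
  else if v = ((6 : Fin 11), (2 : Fin 4)) then 1
  else 2

def DGm : Fin 11 → Fin 11 → ℕ := fun u v =>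
  ![![0,1,2,3,4,5,4,3,2,1,2],
    ![1,0,1,2,3,4,5,4,3,2,3],
    ![2,1,0,1,2,3,4,5,4,3,4],
    ![3,2,1,0,1,2,3,4,5,4,5],
    ![4,3,2,1,0,1,2,3,4,5,6],
    ![5,4,3,2,1,0,1,2,3,4,5],
    ![4,5,4,3,2,1,0,1,2,3,4],
    ![3,4,5,4,3,2,1,0,1,2,3],
    ![2,3,4,5,4,3,2,1,0,1,2],
    ![1,2,3,4,5,4,3,2,1,0,1],
    ![2,3,4,5,6,5,4,3,2,1,0]] u v

def D4m : Fin 4 → Fin 4 → ℕ := fun u v =>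
  ![![0,1,2,1],![1,0,1,2],![2,1,0,1],![1,2,1,0]] u v

instance : DecidableRel leafCycle.Adj := fun a b =>
  decidable_of_iff _ (SimpleGraph.fromRel_adj _ a b).symm

set_option maxHeartbeats 1000000 in
lemma hDG1 : ∀ u : Fin 11, DGm u u = 0 := by decide
set_option maxHeartbeats 1000000 in
lemma hDG2 : ∀ u v : Fin 11, DGm u v = 0 → v = u := by decide
set_option maxHeartbeats 4000000 in
lemma hDG3 : ∀ u v w : Fin 11, leafCycle.Adj v w → DGm u v ≤ DGm u w + 1 := by decide
set_option maxHeartbeats 4000000 in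
lemma hDG4 : ∀ u v : Fin 11, DGm u v ≠ 0 → ∃ w, leafCycle.Adj v w ∧ DGm u w + 1 = DGm u v := by decide

section Graded
variable {V : Type*} (G : SimpleGraph V) (u : V) (d : V → ℕ)

lemma graded_walk (hzero : ∀ v, d v = 0 → v = u)
    (hstep : ∀ v, d v ≠ 0 → ∃ w, G.Adj v w ∧ d w + 1 = d v) :
    ∀ (n : ℕ) (v : V), d v ≤ n → ∃ p : G.Walk v u, p.length = d v := by
  intro n
  induction n with
  | zero => intro v hv
            have := hzero v (Nat.le_zero.mp hv)
            subst this
            exact ⟨Walk.nil, by simp [Nat.le_zero.mp hv]⟩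
  | succ n ih =>
    intro v hv
    by_cases h : d v = 0
    · have := hzero v h; subst this; exact ⟨Walk.nil, by simp [h]⟩
    · obtain ⟨w, hadj, hw⟩ := hstep v h
      obtain ⟨p, hp⟩ := ih w (by omega)
      exact ⟨Walk.cons hadj p, by simp [hp]; omega⟩

lemma graded_lb (h0 : d u = 0) (hlip : ∀ v w, G.Adj v w → d v ≤ d w + 1) :
    ∀ (v : V) (p : G.Walk v u), d v ≤ p.length := by
  intro v p
  induction p with
  | nil => simp [h0]
  | cons hadj q ih => simpa [Walk.length_cons] using le_trans (hlip _ _ hadj) (by omega)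

lemma graded_dist (h0 : d u = 0) (hzero : ∀ v, d v = 0 → v = u)
    (hlip : ∀ v w, G.Adj v w → d v ≤ d w + 1)
    (hstep : ∀ v, d v ≠ 0 → ∃ w, G.Adj v w ∧ d w + 1 = d v) (v : V) :
    G.dist u v = d v := by
  obtain ⟨p, hp⟩ := graded_walk G u d hzero hstep (d v) v le_rfl
  have hub : G.dist v u ≤ d v := hp ▸ SimpleGraph.dist_le p
  have hreach : G.Reachable v u := ⟨p⟩
  obtain ⟨q, hq⟩ := hreach.exists_walk_length_eq_dist
  have hlb : d v ≤ G.dist v u := hq ▸ graded_lb G u d h0 hlip v q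
  rw [SimpleGraph.dist_comm]
  omega

end Graded

set_option maxHeartbeats 1000000 in
lemma hD41 : ∀ u : Fin 4, D4m u u = 0 := by decide
set_option maxHeartbeats 1000000 in
lemma hD42 : ∀ u v : Fin 4, D4m u v = 0 → v = u := by decide
set_option maxHeartbeats 1000000 in
lemma hD43 : ∀ u v w : Fin 4, (cycleGraph 4).Adj v w → D4m u v ≤ D4m u w + 1 := by decide
set_option maxHeartbeats 1000000 in
lemma hD44 : ∀ u v : Fin 4, D4m u v ≠ 0 → ∃ w, (cycleGraph 4).Adj v w ∧ D4m u w + 1 = D4m u v := by decide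

lemma distG (u v : Fin 11) : leafCycle.dist u v = DGm u v :=
  graded_dist _ u (DGm u) (hDG1 u) (hDG2 u) (hDG3 u) (hDG4 u) v

lemma dist4 (u v : Fin 4) : (cycleGraph 4).dist u v = D4m u v :=
  graded_dist _ u (D4m u) (hD41 u) (hD42 u) (hD43 u) (hD44 u) v

abbrev PG := leafCycle □ cycleGraph 4

lemma distP (p q : Fin 11 × Fin 4) : PG.dist p q = DGm p.1 q.1 + D4m p.2 q.2 := by
  apply graded_dist PG p (fun v => DGm p.1 v.1 + D4m p.2 v.2)
  · simp [hDG1, hD41]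
  · intro v hv
    have h1 : v.1 = p.1 := hDG2 _ _ (by omega)
    have h2 : v.2 = p.2 := hD42 _ _ (by omega)
    exact Prod.ext h1 h2
  · intro v w hadj
    rcases SimpleGraph.boxProd_adj.mp hadj with ⟨h, he⟩ | ⟨h, he⟩
    · have := hDG3 p.1 v.1 w.1 h; rw [he]; omega
    · have := hD43 p.2 v.2 w.2 h; rw [he]; omega
  · intro v hv
    by_cases h : DGm p.1 v.1 = 0
    · have h2 : D4m p.2 v.2 ≠ 0 := by omega
      obtain ⟨w, hadj, hw⟩ := hD44 p.2 v.2 h2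
      exact ⟨(v.1, w), SimpleGraph.boxProd_adj.mpr (Or.inr ⟨hadj, rfl⟩), by simp; omega⟩
    · obtain ⟨w, hadj, hw⟩ := hDG4 p.1 v.1 h
      exact ⟨(w, v.2), SimpleGraph.boxProd_adj.mpr (Or.inl ⟨hadj, rfl⟩), by simp; omega⟩


lemma prodZero (p : Fin 11 × Fin 4) : ∀ v, DGm p.1 v.1 + D4m p.2 v.2 = 0 → v = p := fun v hv =>
  Prod.ext (hDG2 _ _ (by omega)) (hD42 _ _ (by omega))

lemma prodStep (p : Fin 11 × Fin 4) : ∀ v, DGm p.1 v.1 + D4m p.2 v.2 ≠ 0 →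
    ∃ w, PG.Adj v w ∧ DGm p.1 w.1 + D4m p.2 w.2 + 1 = DGm p.1 v.1 + D4m p.2 v.2 := by
  intro v hv
  by_cases h : DGm p.1 v.1 = 0
  · have h2 : D4m p.2 v.2 ≠ 0 := by omega
    obtain ⟨w, hadj, hw⟩ := hD44 p.2 v.2 h2
    exact ⟨(v.1, w), SimpleGraph.boxProd_adj.mpr (Or.inr ⟨hadj, rfl⟩), by simp; omega⟩
  · obtain ⟨w, hadj, hw⟩ := hDG4 p.1 v.1 h
    exact ⟨(w, v.2), SimpleGraph.boxProd_adj.mpr (Or.inl ⟨hadj, rfl⟩), by simp; omega⟩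

lemma reachP (p q : Fin 11 × Fin 4) : PG.Reachable p q := by
  obtain ⟨w, -⟩ := graded_walk PG p (fun v => DGm p.1 v.1 + D4m p.2 v.2)
    (prodZero p) (prodStep p) _ q le_rfl
  exact (Walk.reachable w).symm

-- diameter
set_option maxHeartbeats 4000000 in
lemma dle8 : ∀ p q : Fin 11 × Fin 4, DGm p.1 q.1 + D4m p.2 q.2 ≤ 8 := by decide

lemma diamP : PG.diam = 8 := by
  obtain ⟨u, v, huv⟩ := PG.exists_edist_eq_ediam_of_finite
  have hne : PG.ediam ≠ ⊤ := by
    rw [← huv]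
    exact SimpleGraph.edist_ne_top_iff_reachable.mpr (reachP u v)
  have h1 : PG.diam = PG.dist u v := by
    rw [SimpleGraph.diam, SimpleGraph.dist, huv]
  have h2 : PG.dist u v ≤ 8 := by rw [distP]; exact dle8 u v
  have h3 : (8 : ℕ) ≤ PG.diam := by
    have := SimpleGraph.dist_le_diam hne (u := ((10 : Fin 11), (0 : Fin 4)))
      (v := ((4 : Fin 11), (2 : Fin 4)))
    rw [distP] at this
    exact le_trans (by decide : (8:ℕ) ≤ DGm 10 4 + D4m 0 2) this
  omega

lemma exCol_surj : Function.Surjective exCol := by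
  intro b
  fin_cases b
  · exact ⟨((1 : Fin 11), (0 : Fin 4)), by decide⟩
  · exact ⟨((6 : Fin 11), (2 : Fin 4)), by decide⟩
  · exact ⟨((0 : Fin 11), (0 : Fin 4)), by decide⟩

set_option maxHeartbeats 1000000 in
lemma exCol_class : ∀ v : Fin 11 × Fin 4,
    (exCol v = 0 ∧ v = ((1 : Fin 11), (0 : Fin 4))) ∨
    (exCol v = 1 ∧ v = ((6 : Fin 11), (2 : Fin 4))) ∨ exCol v = 2 := by decide


set_option maxHeartbeats 1000000 in
lemma L1 : ∀ q : Fin 11 × Fin 4, DGm q.1 1 + D4m q.2 0 = DGm 1 6 + D4m 0 2 → q = ((6 : Fin 11), (2 : Fin 4)) := by decide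
set_option maxHeartbeats 1000000 in
lemma L2 : ∀ q : Fin 11 × Fin 4, DGm 6 1 + D4m 2 0 = DGm 1 q.1 + D4m 0 q.2 → q = ((6 : Fin 11), (2 : Fin 4)) := by decide
set_option maxHeartbeats 1000000 in
lemma L3 : ∀ q : Fin 11 × Fin 4, DGm q.1 6 + D4m q.2 2 = DGm 6 1 + D4m 2 0 → q = ((1 : Fin 11), (0 : Fin 4)) := by decide
set_option maxHeartbeats 1000000 in
lemma L4 : ∀ q : Fin 11 × Fin 4, DGm 1 6 + D4m 0 2 = DGm 6 q.1 + D4m 2 q.2 → q = ((1 : Fin 11), (0 : Fin 4)) := by decide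
set_option maxHeartbeats 1000000 in
lemma L5 : ∀ q : Fin 11 × Fin 4, DGm 1 q.1 + D4m 0 q.2 = DGm q.1 6 + D4m q.2 2 → False := by decide
set_option maxHeartbeats 1000000 in
lemma L6 : ∀ q : Fin 11 × Fin 4, DGm 6 q.1 + D4m 2 q.2 = DGm q.1 1 + D4m q.2 0 → False := by decide

lemma noRainbow : ¬ HasRainbow3AP PG exCol := by
  rintro ⟨v1, v2, v3, hd, h12, h23, h13⟩
  rw [distP, distP] at hd
  rcases exCol_class v1 with ⟨e1, rfl⟩ | ⟨e1, rfl⟩ | e1 <;>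
    rcases exCol_class v2 with ⟨e2, rfl⟩ | ⟨e2, rfl⟩ | e2 <;>
      rcases exCol_class v3 with ⟨e3, rfl⟩ | ⟨e3, rfl⟩ | e3
  all_goals first
    | exact h12 rfl
    | exact h23 rfl
    | exact h13 rfl
    | exact h12 (e1.trans e2.symm)
    | exact h23 (e2.trans e3.symm)
    | exact h13 (e1.trans e3.symm)
    | exact h12 (e2.symm ▸ e1)
    | exact h13 (congrArg exCol (L1 v1 hd))
    | exact h13 ((congrArg exCol (L2 v3 hd)).symm)
    | exact h13 (congrArg exCol (L3 v1 hd))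
    | exact h13 ((congrArg exCol (L4 v3 hd)).symm)
    | exact L5 v2 hd
    | exact L6 v2 hd

-- ============ combinatorial decide facts ============
def PAR : Fin 11 → Fin 2 := ![0,1,0,1,0,1,0,1,0,1,0]

set_option maxHeartbeats 1000000 in
lemma DGsym : ∀ u v : Fin 11, DGm u v = DGm v u := by decide
set_option maxHeartbeats 1000000 in
lemma D4sym : ∀ u v : Fin 4, D4m u v = D4m v u := by decide

set_option maxHeartbeats 1000000 in
lemma fA : ∀ l i : Fin 4, D4m l i = 1 → D4m l (i+2) = 1 := by decide
set_option maxHeartbeats 1000000 in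
lemma fB : ∀ j i : Fin 4, D4m j i ≠ 1 → j = i ∨ j = i + 2 := by decide
set_option maxHeartbeats 1000000 in
lemma fC : ∀ i j : Fin 4, (j = i ∨ j = i+2) → D4m (i+1) j = 1 := by decide
set_option maxHeartbeats 1000000 in
lemma fD : ∀ l i j : Fin 4, D4m l i = 1 → (j = i ∨ j = i + 2) → D4m l j = D4m l (j+2) := by decide
set_option maxHeartbeats 1000000 in
lemma fE : ∀ i : Fin 4, i + 2 + 2 = i := by decide
set_option maxHeartbeats 1000000 in
lemma f22 : ∀ j : Fin 4, D4m j (j+2) = 2 := by decide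

set_option maxHeartbeats 1000000 in
lemma gA : ∀ a b : Fin 4, a ≠ b → ∃ γ δ : Fin 4, γ≠δ ∧ γ≠a ∧ γ≠b ∧ δ≠a ∧ δ≠b := by decide
set_option maxHeartbeats 1000000 in
lemma gB : ∀ e : Fin 4, ∃ k1 k2 k3 : Fin 4, k1≠k2 ∧ k1≠k3 ∧ k2≠k3 ∧ k1≠e ∧ k2≠e ∧ k3≠e := by decide

lemma pigeon2 : ∀ a b c : Fin 2, a = b ∨ a = c ∨ b = c := by decide
lemma pflip : ∀ a b c : Fin 2, a ≠ c → b ≠ c → a = b := by decide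

set_option maxHeartbeats 1000000 in
lemma F3 : ∀ u v : Fin 11, PAR u = PAR v → ∃ z, DGm z u = DGm z v := by decide

-- key middle principle
lemma hK {c : Fin 11 × Fin 4 → Fin 4} (hnr : ¬ HasRainbow3AP PG c) :
    ∀ (z : Fin 11) (l : Fin 4) (u1 : Fin 11) (j1 : Fin 4) (u2 : Fin 11) (j2 : Fin 4),
    DGm z u1 + D4m l j1 = DGm z u2 + D4m l j2 → c (u1,j1) ≠ c (u2,j2) →
    c (z,l) = c (u1,j1) ∨ c (z,l) = c (u2,j2) := by
  intro z l u1 j1 u2 j2 he hne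
  by_contra h
  push_neg at h
  refine hnr ⟨(u1,j1),(z,l),(u2,j2), ?_, fun hh => h.1 hh.symm, h.2, hne⟩
  rw [distP, distP]
  simp only
  rw [DGsym u1 z, D4sym j1 l]
  exact he

-- ============ Case 2 ============
lemma case2 {c : Fin 11 × Fin 4 → Fin 4} (hsurj : Function.Surjective c)
    (hnr : ¬ HasRainbow3AP PG c) (w : Fin 11) (i : Fin 4)
    (hab : c (w,i) ≠ c (w,i+2)) : False := by
  have K := hK hnr
  set a := c (w,i) with ha
  set b := c (w,i+2) with hb
  have L1 : ∀ u l, D4m l i = 1 → c (u,l) = a ∨ c (u,l) = b := by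
    intro u l hl
    exact K u l w i w (i+2) (by have := fA l i hl; omega) hab
  obtain ⟨γ, δ, hgd, hga, hgb, hda, hdb⟩ := gA a b hab
  -- a rep of a color k ∉ {a,b} sits in rows {i, i+2} and its antipode has the same color
  have antipode : ∀ k : Fin 4, k ≠ a → k ≠ b → ∀ u jy, c (u,jy) = k →
      (jy = i ∨ jy = i + 2) ∧ c (u, jy+2) = k := by
    intro k hka hkb u jy hy
    have hjy : jy = i ∨ jy = i + 2 := by
      refine fB jy i (fun h1 => ?_)
      rcases L1 u jy h1 with h | h <;> rw [hy] at h <;> [exact hka h; exact hkb h]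
    refine ⟨hjy, ?_⟩
    by_contra he'
    set e := c (u, jy+2) with hed
    have hke : k ≠ e := fun hh => he' (hh ▸ rfl) |>.elim
    have hall : ∀ z l, D4m l i = 1 → c (z,l) = e := by
      intro z l hl
      have heq : DGm z u + D4m l jy = DGm z u + D4m l (jy+2) := by
        rw [fD l i jy hl hjy]
      rcases K z l u jy u (jy+2) heq (by rw [hy]; exact fun hh => he' hh.symm) with h | h
      · rw [hy] at h
        exfalso
        rcases L1 z l hl with h2 | h2 <;> rw [h] at h2 <;> [exact hka h2; exact hkb h2]
      · exact h
    -- three colors different from e, all with reps in rows {i,i+2}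
    obtain ⟨k1, k2, k3, h12, h13, h23, h1e, h2e, h3e⟩ := gB e
    have getrep : ∀ m : Fin 4, m ≠ e → ∃ v jv, c (v,jv) = m ∧ (jv = i ∨ jv = i+2) := by
      intro m hme
      obtain ⟨⟨v, jv⟩, hv⟩ := hsurj m
      refine ⟨v, jv, hv, fB jv i (fun h1 => hme (hv ▸ hall v jv h1 ▸ rfl))⟩
    obtain ⟨v1, j1, hv1, hj1⟩ := getrep k1 h1e
    obtain ⟨v2, j2, hv2, hj2⟩ := getrep k2 h2e
    obtain ⟨v3, j3, hv3, hj3⟩ := getrep k3 h3e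
    have kill : ∀ (va : Fin 11) (ja : Fin 4) (vb : Fin 11) (jb : Fin 4),
        c (va,ja) ≠ c (vb,jb) → c (va,ja) ≠ e → c (vb,jb) ≠ e →
        (ja = i ∨ ja = i+2) → (jb = i ∨ jb = i+2) →
        PAR va = PAR vb → False := by
      intro va ja vb jb hne hae hbe hja hjb hp
      obtain ⟨z, hz⟩ := F3 va vb hp
      have heq : DGm z va + D4m (i+1) ja = DGm z vb + D4m (i+1) jb := by
        rw [fC i ja hja, fC i jb hjb, hz]
      have hm := hall z (i+1) (fC i i (Or.inl rfl))
      rcases K z (i+1) va ja vb jb heq hne with h | h <;> rw [hm] at h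
      · exact hae h.symm
      · exact hbe h.symm
    rcases pigeon2 (PAR v1) (PAR v2) (PAR v3) with hp | hp | hp
    · exact kill v1 j1 v2 j2 (by rw [hv1, hv2]; exact h12) (hv1 ▸ h1e) (hv2 ▸ h2e) hj1 hj2 hp
    · exact kill v1 j1 v3 j3 (by rw [hv1, hv3]; exact h13) (hv1 ▸ h1e) (hv3 ▸ h3e) hj1 hj3 hp
    · exact kill v2 j2 v3 j3 (by rw [hv2, hv3]; exact h23) (hv2 ▸ h2e) (hv3 ▸ h3e) hj2 hj3 hp
  -- reps of γ and δ with both rows i and i+2 colored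
  have bothrows : ∀ k : Fin 4, k ≠ a → k ≠ b → ∃ u, c (u,i) = k ∧ c (u,i+2) = k := by
    intro k hka hkb
    obtain ⟨⟨u, jy⟩, hy⟩ := hsurj k
    obtain ⟨hjy, hanti⟩ := antipode k hka hkb u jy hy
    rcases hjy with rfl | rfl
    · exact ⟨u, hy, hanti⟩
    · exact ⟨u, by rw [fE i] at hanti; exact hanti, hy⟩
  obtain ⟨u, hui, hui2⟩ := bothrows γ hga hgb
  obtain ⟨v, hvi, hvi2⟩ := bothrows δ hda hdb
  have hD1 : D4m (i+1) i = 1 := fC i i (Or.inl rfl)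
  have hD2 : D4m (i+1) (i+2) = 1 := fC i (i+2) (Or.inr rfl)
  have parw : ∀ (x : Fin 11) (k : Fin 4), k ≠ a → k ≠ b → c (x,i) = k → PAR x ≠ PAR w := by
    intro x k hka hkb hx hp
    obtain ⟨z, hz⟩ := F3 x w hp
    have h1 := K z (i+1) x i w i (by rw [hz]) (by rw [hx, ← ha]; exact hka)
    have h2 := K z (i+1) x i w (i+2) (by rw [hD1, hD2, hz]) (by rw [hx, ← hb]; exact hkb)
    have hzk : c (z, i+1) = k := by
      rcases h1 with h | h
      · rw [hx] at h; exact h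
      · exfalso
        rw [← ha] at h
        rcases h2 with h2 | h2
        · rw [hx] at h2; rw [h2] at h; exact hka h
        · rw [← hb] at h2; rw [h2] at h; exact hab h.symm
    rcases L1 z (i+1) hD1 with h | h <;> rw [hzk] at h <;> [exact hka h; exact hkb h]
  have hpu := parw u γ hga hgb hui
  have hpv := parw v δ hda hdb hvi
  have hpuv : PAR u = PAR v := pflip _ _ _ hpu hpv
  obtain ⟨z, hz⟩ := F3 u v hpuv
  have h := K z (i+1) u i v i (by rw [hz]) (by rw [hui, hvi]; exact hgd)
  rw [hui, hvi] at h
  rcases L1 z (i+1) hD1 with h2 | h2 <;> rcases h with h | h <;> rw [h] at h2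
  · exact hga h2
  · exact hda h2
  · exact hgb h2
  · exact hdb h2

-- ============ Case 1 decide facts ============
set_option maxHeartbeats 4000000 in
lemma Q2 : ∀ u v w : Fin 11, u≠v → u≠w → v≠w → PAR u = PAR v → PAR u = PAR w →
    ∃ z, (DGm z u = DGm z v ∨ DGm z u = DGm z v + 2 ∨ DGm z v = DGm z u + 2) ∧
         (DGm z u = DGm z w ∨ DGm z u = DGm z w + 2 ∨ DGm z w = DGm z u + 2) ∧
         (DGm z v = DGm z w ∨ DGm z v = DGm z w + 2 ∨ DGm z w = DGm z v + 2) := by decide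

set_option maxHeartbeats 4000000 in
lemma Q3 : ∀ u v w : Fin 11, u≠v → PAR u = PAR v → PAR u ≠ PAR w →
    DGm w u = DGm w v ∨
    (DGm v u = DGm v w + 1 ∨ DGm v w = DGm v u + 1) ∨
    (DGm u v = DGm u w + 1 ∨ DGm u w = DGm u v + 1) ∨
    ∃ z, (DGm z u = DGm z w + 1 ∨ DGm z w = DGm z u + 1) ∧
         (DGm z v = DGm z w + 1 ∨ DGm z w = DGm z v + 1) := by decide

def RK : Fin 11 → Fin 11 → ℕ := fun z0 x =>
  ![![0,1,2,2,3,3,3,2,2,1,2],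
    ![0,1,1,1,1,2,2,2,1,1,1],
    ![0,1,2,1,1,1,2,2,2,1,2],
    ![0,1,1,2,1,1,1,1,1,1,1],
    ![0,1,2,2,3,2,2,1,1,1,2],
    ![0,1,1,2,2,3,2,2,1,1,1],
    ![0,1,1,1,2,2,3,2,2,1,1],
    ![0,1,1,1,1,1,1,2,1,1,1],
    ![0,1,2,2,2,1,1,1,2,1,1],
    ![0,1,1,2,2,2,1,1,1,1,1],
    ![0,1,2,2,3,2,2,1,1,1,2]] z0 x

def Rrel (z0 x y : Fin 11) : Prop :=
  if PAR x = PAR y then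
    DGm z0 x = DGm z0 y ∨ (PAR z0 ≠ PAR x ∧ (DGm z0 x = DGm z0 y + 2 ∨ DGm z0 y = DGm z0 x + 2))
  else DGm z0 x = DGm z0 y + 1 ∨ DGm z0 y = DGm z0 x + 1

instance : ∀ z0 x y, Decidable (Rrel z0 x y) := fun z0 x y => by
  unfold Rrel; infer_instance

set_option maxHeartbeats 4000000 in
lemma CONN : ∀ z0 x : Fin 11, RK z0 x ≠ 0 → ∃ y, Rrel z0 x y ∧ RK z0 y < RK z0 x := by decide
set_option maxHeartbeats 1000000 in
lemma CONN0 : ∀ z0 x : Fin 11, RK z0 x = 0 → x = 0 := by decide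

def e2 : Fin 2 → Fin 4 := ![0,1]

set_option maxHeartbeats 1000000 in
lemma fD42 : ∀ (l : Fin 4) (s : Bool), ∃ jx jy : Fin 4, (jx = 0 ∨ jx = 2) ∧ (jy = 1 ∨ jy = 3) ∧
    (if s then D4m l jy = D4m l jx + 1 else D4m l jx = D4m l jy + 1) := by decide

lemma fin2add : ∀ a : Fin 2, a + a = 0 := by decide
lemma fin2ne : ∀ a b : Fin 2, a ≠ b → a = b + 1 := by decide
lemma fin2cases : ∀ a : Fin 2, a = 0 ∨ a = 1 := by decide

lemma fin4cases : ∀ j : Fin 4, j = 0 ∨ j = 1 ∨ j = 2 ∨ j = 3 := by decide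
lemma fin2addne : ∀ (t a b : Fin 2), a ≠ b → t + a ≠ t + b := by decide
lemma f02 : (2 : Fin 4) = 0 + 2 := by decide
lemma f13 : (3 : Fin 4) = 1 + 2 := by decide

lemma case1 {c : Fin 11 × Fin 4 → Fin 4} (hsurj : Function.Surjective c)
    (hnr : ¬ HasRainbow3AP PG c)
    (hanti : ∀ (w : Fin 11) (i : Fin 4), c (w,i) = c (w,i+2)) : False := by
  have K := hK hnr
  set g : Fin 2 → Fin 11 → Fin 4 := fun t x => c (x, e2 (t + PAR x)) with hgdef
  have grow : ∀ (t : Fin 2) (x : Fin 11), g t x = c (x, e2 (t + PAR x)) := fun _ _ => rfl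
  -- (i)
  have ci : ∀ (x y : Fin 11) (j : Fin 4), c (x,j) ≠ c (y,j) → ∀ (z : Fin 11) (l : Fin 4),
      DGm z x = DGm z y → c (z,l) = c (x,j) ∨ c (z,l) = c (y,j) := by
    intro x y j hne z l hzz
    exact K z l x j y j (by omega) hne
  -- (i-extra)
  have ci' : ∀ (x y : Fin 11) (j : Fin 4), c (x,j) ≠ c (y,j) → ∀ z : Fin 11,
      (DGm z x = DGm z y + 2 ∨ DGm z y = DGm z x + 2) →
      c (z,j) = c (x,j) ∨ c (z,j) = c (y,j) := by
    intro x y j hne z hd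
    rcases hd with hd | hd
    · have := K z j x j y (j+2) (by rw [hD41 j, f22 j]; omega) (by rw [← hanti y j]; exact hne)
      rw [← hanti y j] at this; exact this
    · have := K z j x (j+2) y j (by rw [f22 j, hD41 j]; omega) (by rw [← hanti x j]; exact hne)
      rw [← hanti x j] at this; exact this
  -- near2 dispatch
  have disp : ∀ (z x y : Fin 11) (j : Fin 4), c (x,j) ≠ c (y,j) →
      (DGm z x = DGm z y ∨ DGm z x = DGm z y + 2 ∨ DGm z y = DGm z x + 2) →
      c (z,j) = c (x,j) ∨ c (z,j) = c (y,j) := by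
    intro z x y j hne hn
    rcases hn with h | h
    · exact ci x y j hne z j h
    · exact ci' x y j hne z h
  -- (ii)
  have cii : ∀ x y : Fin 11, c (x, e2 0) ≠ c (y, e2 1) → ∀ z : Fin 11,
      (DGm z x = DGm z y + 1 ∨ DGm z y = DGm z x + 1) → ∀ l : Fin 4,
      c (z,l) = c (x, e2 0) ∨ c (z,l) = c (y, e2 1) := by
    intro x y hne z hd l
    have colx : ∀ jx : Fin 4, (jx = 0 ∨ jx = 2) → c (x, jx) = c (x, e2 0) := by
      rintro jx (rfl | rfl)
      · rfl
      · rw [f02, ← hanti x 0]; rfl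
    have coly : ∀ jy : Fin 4, (jy = 1 ∨ jy = 3) → c (y, jy) = c (y, e2 1) := by
      rintro jy (rfl | rfl)
      · rfl
      · rw [f13, ← hanti y 1]; rfl
    rcases hd with hd | hd
    · obtain ⟨jx, jy, hjx, hjy, hrel⟩ := fD42 l true
      simp only [if_true] at hrel
      have := K z l x jx y jy (by omega) (by rw [colx jx hjx, coly jy hjy]; exact hne)
      rw [colx jx hjx, coly jy hjy] at this; exact this
    · obtain ⟨jx, jy, hjx, hjy, hrel⟩ := fD42 l false
      simp only [if_false, Bool.false_eq_true] at hrel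
      have := K z l x jx y jy (by omega) (by rw [colx jx hjx, coly jy hjy]; exact hne)
      rw [colx jx hjx, coly jy hjy] at this; exact this
  -- oriented (ii) in class terms
  have ciiO : ∀ (x y : Fin 11) (tx ty : Fin 2), tx ≠ ty → c (x, e2 tx) ≠ c (y, e2 ty) →
      ∀ z, (DGm z x = DGm z y + 1 ∨ DGm z y = DGm z x + 1) → ∀ l : Fin 4,
      c (z,l) = c (x, e2 tx) ∨ c (z,l) = c (y, e2 ty) := by
    intro x y tx ty hnet hne z hd l
    rcases fin2cases tx with h0 | h0
    · have h1 : ty = 1 := by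
        rcases fin2cases ty with h | h
        · exact absurd (h0.trans h.symm) hnet
        · exact h
      subst h0 h1
      exact cii x y hne z hd l
    · have h1 : ty = 0 := by
        rcases fin2cases ty with h | h
        · exact h
        · exact absurd (h0.trans h.symm) hnet
      subst h0 h1
      rcases cii y x (Ne.symm hne) z (hd.symm.imp (fun h => h) (fun h => h)) l with h | h
      · exact Or.inr h
      · exact Or.inl h
  -- inner 3-colors-in-a-class lemma
  have lA' : ∀ (t : Fin 2) (u v w : Fin 11), g t u ≠ g t v → g t u ≠ g t w → g t v ≠ g t w →
      PAR u = PAR v → False := by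
    intro t u v w huv huw hvw hpuv
    have hvrow : c (v, e2 (t + PAR u)) = g t v := by rw [grow, hpuv]
    have huv' : u ≠ v := fun h => huv (by rw [h])
    have hnc_uv : c (u, e2 (t + PAR u)) ≠ c (v, e2 (t + PAR u)) := by
      rw [hvrow]; exact huv
    by_cases hpuw : PAR u = PAR w
    · have hwrow : c (w, e2 (t + PAR u)) = g t w := by rw [grow, hpuw]
      have huw' : u ≠ w := fun h => huw (by rw [h])
      have hvw' : v ≠ w := fun h => hvw (by rw [h])
      obtain ⟨z, n1, n2, n3⟩ := Q2 u v w huv' huw' hvw' hpuv hpuw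
      have m1 := disp z u v (e2 (t + PAR u)) hnc_uv n1
      have m2 := disp z u w (e2 (t + PAR u)) (by rw [hwrow]; exact huw) n2
      have m3 := disp z v w (e2 (t + PAR u)) (by rw [hvrow, hwrow]; exact hvw) n3
      rw [hvrow] at m1 m3
      rw [hwrow] at m2 m3
      rcases m2 with h2 | h2
      · rcases m3 with h3 | h3
        · exact huv (h2.symm.trans h3)
        · exact huw (h2.symm.trans h3)
      · rcases m1 with h1 | h1
        · exact huw (h1.symm.trans h2)
        · exact hvw (h1.symm.trans h2)
    · have hnet : t + PAR u ≠ t + PAR w := fin2addne t _ _ hpuw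
      have hnc_uw : c (u, e2 (t + PAR u)) ≠ c (w, e2 (t + PAR w)) := huw
      have hnc_vw : c (v, e2 (t + PAR u)) ≠ c (w, e2 (t + PAR w)) := by rw [hvrow]; exact hvw
      rcases Q3 u v w huv' hpuv hpuw with hK1 | hK2 | hK3 | ⟨z, hn1, hn2⟩
      · rcases ci u v (e2 (t + PAR u)) hnc_uv w (e2 (t + PAR w)) hK1 with h | h
        · exact huw h.symm
        · rw [hvrow] at h; exact hvw h.symm
      · rcases ciiO u w _ _ hnet hnc_uw v hK2 (e2 (t + PAR u)) with h | h
        · rw [hvrow] at h; exact huv h.symm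
        · rw [hvrow] at h; exact hvw h
      · rcases ciiO v w _ _ hnet hnc_vw u hK3 (e2 (t + PAR u)) with h | h
        · rw [hvrow] at h; exact huv h
        · exact huw h
      · have mu := ciiO u w _ _ hnet hnc_uw z hn1 (e2 (t + PAR u))
        have mv := ciiO v w _ _ hnet hnc_vw z hn2 (e2 (t + PAR u))
        rw [hvrow] at mv
        have hzw : c (z, e2 (t + PAR u)) = g t w := by
          rcases mu with h | h
          · rcases mv with h' | h'
            · exact absurd (h.symm.trans h') huv
            · exact h'
          · exact h
        have n12 : DGm z u = DGm z v ∨ DGm z u = DGm z v + 2 ∨ DGm z v = DGm z u + 2 := by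
          omega
        rcases disp z u v (e2 (t + PAR u)) hnc_uv n12 with h | h
        · rw [hzw] at h; exact huw h.symm
        · rw [hvrow, hzw] at h; exact hvw h.symm
  have lA : ∀ (t : Fin 2) (u v w : Fin 11), g t u ≠ g t v → g t u ≠ g t w → g t v ≠ g t w →
      False := by
    intro t u v w h1 h2 h3
    rcases pigeon2 (PAR u) (PAR v) (PAR w) with hp | hp | hp
    · exact lA' t u v w h1 h2 h3 hp
    · exact lA' t u w v h2 h1 (Ne.symm h3) hp
    · exact lA' t v w u h3 (Ne.symm h1) (Ne.symm h2) hp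
  -- two colors in a class + third color in the other class: connectivity kill
  have lB : ∀ (t : Fin 2) (xa xb z0 : Fin 11), g t xa ≠ g t xb →
      g (t+1) z0 ≠ g t xa → g (t+1) z0 ≠ g t xb →
      (∀ x, g t x = g t xa ∨ g t x = g t xb) → False := by
    intro t xa xb z0 hab hz1 hz2 hall
    have gnot : ∀ x y : Fin 11, g (t+1) z0 = g t x ∨ g (t+1) z0 = g t y → False := by
      intro x y hh
      rcases hh with hh | hh
      · rcases hall x with h | h <;> rw [h] at hh <;> [exact hz1 hh; exact hz2 hh]
      · rcases hall y with h | h <;> rw [h] at hh <;> [exact hz1 hh; exact hz2 hh]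
    have hcl : ∀ x y, Rrel z0 x y → g t x = g t y := by
      intro x y hr
      by_contra hne
      unfold Rrel at hr
      split_ifs at hr with hpxy
      · have hyrow : c (y, e2 (t + PAR x)) = g t y := by rw [grow, hpxy]
        have hnc : c (x, e2 (t + PAR x)) ≠ c (y, e2 (t + PAR x)) := by
          rw [hyrow]; exact hne
        rcases hr with heq | ⟨hpz, hd2⟩
        · have := ci x y (e2 (t + PAR x)) hnc z0 (e2 ((t+1) + PAR z0)) heq
          rw [hyrow] at this
          exact gnot x y this
        · have hh := ci' x y (e2 (t + PAR x)) hnc z0 hd2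
          rw [hyrow] at hh
          have hrowz : e2 (t + PAR x) = e2 ((t+1) + PAR z0) := by
            have hpx : PAR x = PAR z0 + 1 := fin2ne _ _ (fun h => hpz h.symm)
            rw [hpx]; congr 1; abel
          rcases hh with h | h
          · exact gnot x y (Or.inl (by rw [grow, ← hrowz]; exact h))
          · exact gnot x y (Or.inr (by rw [grow, ← hrowz]; exact h))
      · have hnet : t + PAR x ≠ t + PAR y := fin2addne t _ _ hpxy
        have := ciiO x y _ _ hnet hne z0 hr (e2 ((t+1) + PAR z0))
        exact gnot x y this
    have hconst : ∀ (n : ℕ) (x : Fin 11), RK z0 x ≤ n → g t x = g t 0 := by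
      intro n
      induction n with
      | zero => intro x hx; rw [CONN0 z0 x (Nat.le_zero.mp hx)]
      | succ n ih =>
        intro x hx
        by_cases h0 : RK z0 x = 0
        · rw [CONN0 z0 x h0]
        · obtain ⟨y, hry, hlt⟩ := CONN z0 x h0
          exact (hcl x y hry).trans (ih y (by omega))
    exact hab ((hconst _ xa le_rfl).trans (hconst _ xb le_rfl).symm)
  -- every color has a g-cell
  have hrep : ∀ k : Fin 4, ∃ t x, g t x = k := by
    intro k
    obtain ⟨⟨x, j⟩, hx⟩ := hsurj k
    have hr : ∃ r : Fin 2, c (x, e2 r) = k := by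
      rcases fin4cases j with rfl | rfl | rfl | rfl
      · exact ⟨0, hx⟩
      · exact ⟨1, hx⟩
      · exact ⟨0, by show c (x, e2 0) = k; rw [show e2 0 = (0 : Fin 4) from rfl, hanti x 0, ← f02]; exact hx⟩
      · exact ⟨1, by show c (x, e2 1) = k; rw [show e2 1 = (1 : Fin 4) from rfl, hanti x 1, ← f13]; exact hx⟩
    obtain ⟨r, hr⟩ := hr
    refine ⟨r + PAR x, x, ?_⟩
    rw [grow]
    have : r + PAR x + PAR x = r := by rw [add_assoc, fin2add, add_zero]
    rw [this]
    exact hr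
  -- finish from two same-class distinct-colored cells and a third color elsewhere
  have finish : ∀ (t : Fin 2) (xa xb : Fin 11) (tc : Fin 2) (xc : Fin 11),
      g t xa ≠ g t xb → g tc xc ≠ g t xa → g tc xc ≠ g t xb → False := by
    intro t xa xb tc xc hab' hc1 hc2
    by_cases htc : tc = t
    · rw [htc] at hc1 hc2
      exact lA t xa xb xc hab' (Ne.symm hc1) (Ne.symm hc2)
    · have he : tc = t + 1 := fin2ne tc t htc
      rw [he] at hc1 hc2
      refine lB t xa xb xc hab' hc1 hc2 ?_
      intro x
      by_contra hno
      push_neg at hno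
      exact lA t xa xb x hab' (Ne.symm hno.1) (Ne.symm hno.2)
  obtain ⟨t0, x0, hc0⟩ := hrep 0
  obtain ⟨t1, x1, hc1⟩ := hrep 1
  obtain ⟨t2, x2, hc2⟩ := hrep 2
  rcases pigeon2 t0 t1 t2 with hp | hp | hp
  · have h1' : g t0 x1 = 1 := by rw [hp]; exact hc1
    exact finish t0 x0 x1 t2 x2 (by rw [hc0, h1']; decide)
      (by rw [hc2, hc0]; decide) (by rw [hc2, h1']; decide)
  · have h2' : g t0 x2 = 2 := by rw [hp]; exact hc2
    exact finish t0 x0 x2 t1 x1 (by rw [hc0, h2']; decide)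
      (by rw [hc1, hc0]; decide) (by rw [hc1, h2']; decide)
  · have h2' : g t1 x2 = 2 := by rw [hp]; exact hc2
    exact finish t1 x1 x2 t0 x0 (by rw [hc1, h2']; decide)
      (by rw [hc0, hc1]; decide) (by rw [hc0, h2']; decide)

lemma master {c : Fin 11 × Fin 4 → Fin 4} (hsurj : Function.Surjective c) :
    HasRainbow3AP (leafCycle □ cycleGraph 4) c := by
  by_contra hnr
  by_cases hc : ∀ (w : Fin 11) (i : Fin 4), c (w,i) = c (w,i+2)
  · exact case1 hsurj hnr hc
  · push_neg at hc
    obtain ⟨w, i, h⟩ := hc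
    exact case2 hsurj hnr w i h

lemma fin2pigeon : ∀ a b c : Fin 2, a ≠ b → b ≠ c → a ≠ c → False := by decide

theorem stmt_19 :
    Function.Surjective exCol ∧
    ¬ HasRainbow3AP (leafCycle □ cycleGraph 4) exCol ∧
    aw (leafCycle □ cycleGraph 4) = 4 ∧
    Even ((leafCycle □ cycleGraph 4).diam) := by
  refine ⟨exCol_surj, noRainbow, ?_, ?_⟩
  · have h4 : (4 : ℕ) ∈ {r : ℕ | 0 < r ∧
        ∀ c : Fin 11 × Fin 4 → Fin r, Function.Surjective c →
          HasRainbow3AP (leafCycle □ cycleGraph 4) c} :=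
      ⟨by norm_num, fun c hs => master hs⟩
    refine le_antisymm (Nat.sInf_le h4) (le_csInf ⟨4, h4⟩ ?_)
    rintro r ⟨hr0, hr⟩
    by_contra hlt
    push_neg at hlt
    interval_cases r
    · obtain ⟨v1, v2, v3, -, h12, -, -⟩ :=
        hr (fun _ => (0 : Fin 1)) (fun b => ⟨((0 : Fin 11), (0 : Fin 4)), Subsingleton.elim _ _⟩)
      exact h12 rfl
    · have hs2 : Function.Surjective
          (fun v : Fin 11 × Fin 4 => if v = ((1 : Fin 11), (0 : Fin 4)) then (0 : Fin 2) else 1) := by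
        intro b
        rcases fin2cases b with rfl | rfl
        · exact ⟨((1 : Fin 11), (0 : Fin 4)), by simp⟩
        · exact ⟨((0 : Fin 11), (0 : Fin 4)), by decide⟩
      obtain ⟨v1, v2, v3, -, h12, h23, h13⟩ :=
        hr (fun v => if v = ((1 : Fin 11), (0 : Fin 4)) then 0 else 1) hs2
      exact fin2pigeon _ _ _ h12 h23 h13
    · exact noRainbow (hr exCol exCol_surj)
  · rw [show (leafCycle □ cycleGraph 4).diam = PG.diam from rfl, diamP]
    exact ⟨4, rfl⟩
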